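/- arXiv:math/9902043 — 2 statements merged into one kernel-verified Lean document; each statement's English description precedes it below -/
import Mathlib

section
/- There exists a constant c₁ > 0 such that for all sufficiently large n and every positive integer δ, the probability that A(x) > c₁/(2^δ · n³) is at least 1 − 2^{−δ}. -/
open MeasureTheory Set MeasurableSpace
open scoped ENNReal

/-- Area of the triangle with vertices `P`, `Q`, `R` in the plane:
`½ · |det (Q - P, R - P)|`. -/
noncomputable def triArea (P Q R : ℝ × ℝ) : ℝ :=
  |(Q.1 - P.1) * (R.2 - P.2) - (Q.2 - P.2) * (R.1 - P.1)| / 2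

/-- Minimum area of a triangle formed by three of the points `x 0, …, x (n-1)`. -/
noncomputable def minTriArea (n : ℕ) (x : Fin n → ℝ × ℝ) : ℝ :=
  sInf {a | ∃ i j k : Fin n, i < j ∧ j < k ∧ a = triArea (x i) (x j) (x k)}

/-- Uniform probability measure on the unit square `[0,1]²`. -/
noncomputable def unifSq : Measure (ℝ × ℝ) :=
  volume.restrict (Set.Icc ((0, 0) : ℝ × ℝ) (1, 1))

/-- Joint distribution of `n` points chosen independently and uniformly in `[0,1]²`. -/
noncomputable def μpts (n : ℕ) : Measure (Fin n → ℝ × ℝ) :=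
  Measure.pi fun _ => unifSq






noncomputable def lam0 : Measure ℝ := volume.restrict (Set.Icc (0:ℝ) 1)

instance : IsProbabilityMeasure lam0 :=
  ⟨by simp [lam0, Real.volume_Icc]⟩

noncomputable def sgi (v : ℝ) : ℝ≥0∞ := (ENNReal.ofReal (Real.sqrt |v|))⁻¹

lemma sgi_neg (v : ℝ) : sgi (-v) = sgi v := by simp [sgi]

lemma measurable_sgi : Measurable sgi :=
  (measurable_norm.sqrt.ennreal_ofReal).inv

lemma L0 : ∫⁻ v in Icc (0:ℝ) 1, sgi v ∂volume ≤ ENNReal.ofReal 2 := by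
  have hae : ∀ᵐ v ∂(volume.restrict (Icc (0:ℝ) 1)),
      sgi v = ENNReal.ofReal (v ^ (-(1/2) : ℝ)) := by
    have h0 : ∀ᵐ (v : ℝ) ∂volume, v ≠ 0 := by
      rw [MeasureTheory.ae_iff]
      simp only [not_not]
      have : {v : ℝ | v = 0} = {0} := by ext; simp
      rw [this]; exact measure_singleton 0
    filter_upwards [ae_restrict_mem measurableSet_Icc, ae_restrict_of_ae h0] with v hv hv0
    have hvpos : 0 < v := lt_of_le_of_ne hv.1 (Ne.symm hv0)
    have habs : |v| = v := abs_of_pos hvpos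
    rw [sgi, habs, ← ENNReal.ofReal_inv_of_pos (Real.sqrt_pos.2 hvpos)]
    congr 1
    rw [Real.sqrt_eq_rpow, ← Real.rpow_neg_one, ← Real.rpow_mul hvpos.le]
    norm_num
  rw [lintegral_congr_ae hae]
  have hint : IntegrableOn (fun v : ℝ => v ^ (-(1/2) : ℝ)) (Icc (0:ℝ) 1) volume := by
    rw [integrableOn_Icc_iff_integrableOn_Ioc]
    have := intervalIntegral.intervalIntegrable_rpow' (a := 0) (b := 1) (r := -(1/2))
      (by norm_num)
    rw [intervalIntegrable_iff_integrableOn_Ioc_of_le (by norm_num : (0:ℝ) ≤ 1)] at this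
    exact this
  rw [← ofReal_integral_eq_lintegral_ofReal hint]
  · apply ENNReal.ofReal_le_ofReal
    have heq : ∫ v in Icc (0:ℝ) 1, v ^ (-(1/2) : ℝ) = ∫ v in (0:ℝ)..1, v ^ (-(1/2) : ℝ) := by
      rw [intervalIntegral.integral_of_le (by norm_num : (0:ℝ) ≤ 1),
        integral_Icc_eq_integral_Ioc]
    rw [heq, integral_rpow (Or.inl (by norm_num))]
    norm_num
  · filter_upwards [ae_restrict_mem measurableSet_Icc] with v hv
    exact Real.rpow_nonneg hv.1 _

lemma L0' : ∫⁻ v in Icc (-1:ℝ) 0, sgi v ∂volume ≤ ENNReal.ofReal 2 := by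
  have hmap : Measure.map Neg.neg (volume : Measure ℝ) = volume :=
    Measure.map_neg_eq_self (volume : Measure ℝ)
  have h2 := MeasureTheory.setLIntegral_map (μ := (volume : Measure ℝ)) (s := Icc (-1:ℝ) 0)
    measurableSet_Icc (f := sgi) (g := Neg.neg) measurable_sgi measurable_neg
  rw [hmap] at h2
  rw [h2]
  have hpre : (Neg.neg ⁻¹' Icc (-1:ℝ) 0 : Set ℝ) = Icc 0 1 := by
    ext v
    simp only [Set.mem_preimage, Set.mem_Icc]
    constructor <;> intro h <;> constructor <;> linarith [h.1, h.2]
  rw [hpre]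
  calc ∫⁻ v in Icc (0:ℝ) 1, sgi (-v) ∂volume
      = ∫⁻ v in Icc (0:ℝ) 1, sgi v ∂volume := by
        apply lintegral_congr; intro v; rw [sgi_neg]
    _ ≤ ENNReal.ofReal 2 := L0

lemma Lhalf : ∫⁻ v in Icc (-1:ℝ) 1, sgi v ∂volume ≤ ENNReal.ofReal 4 := by
  calc ∫⁻ v in Icc (-1:ℝ) 1, sgi v ∂volume
      ≤ ∫⁻ v in Icc (-1:ℝ) 0 ∪ Icc (0:ℝ) 1, sgi v ∂volume := by
        apply lintegral_mono_set
        intro v hv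
        rcases le_total v 0 with h | h
        · exact Or.inl ⟨hv.1, h⟩
        · exact Or.inr ⟨h, hv.2⟩
    _ ≤ (∫⁻ v in Icc (-1:ℝ) 0, sgi v ∂volume) + ∫⁻ v in Icc (0:ℝ) 1, sgi v ∂volume :=
        lintegral_union_le _ _ _
    _ ≤ ENNReal.ofReal 2 + ENNReal.ofReal 2 := add_le_add L0' L0
    _ = ENNReal.ofReal 4 := by rw [← ENNReal.ofReal_add] <;> norm_num

lemma L3 {p : ℝ} (hp : p ∈ Icc (0:ℝ) 1) :
    ∫⁻ u, sgi (u - p) ∂lam0 ≤ ENNReal.ofReal 4 := by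
  rw [lam0, ← lintegral_indicator measurableSet_Icc]
  rw [← lintegral_add_right_eq_self
    (fun u => (Icc (0:ℝ) 1).indicator (fun u => sgi (u - p)) u) p]
  calc ∫⁻ v, (Icc (0:ℝ) 1).indicator (fun u => sgi (u - p)) (v + p) ∂volume
      ≤ ∫⁻ v, (Icc (-1:ℝ) 1).indicator sgi v ∂volume := by
        apply lintegral_mono
        intro v
        dsimp only
        by_cases hv : v + p ∈ Icc (0:ℝ) 1
        · rw [Set.indicator_of_mem hv]
          simp only [add_sub_cancel_right]
          have hv' : v ∈ Icc (-1:ℝ) 1 := by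
            constructor
            · linarith [hv.1, hp.2]
            · linarith [hv.2, hp.1]
          rw [Set.indicator_of_mem hv']
        · rw [Set.indicator_of_notMem hv]
          exact zero_le
    _ = ∫⁻ v in Icc (-1:ℝ) 1, sgi v ∂volume := lintegral_indicator measurableSet_Icc _
    _ ≤ ENNReal.ofReal 4 := Lhalf

lemma strip {ε : ℝ} (hε : 0 < ε) (a t : ℝ) :
    lam0 {r : ℝ | |a - t * r| ≤ 2*ε} ≤ ENNReal.ofReal (4*ε) * (ENNReal.ofReal |t|)⁻¹ := by
  by_cases ht : t = 0
  · rw [ht]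
    simp only [abs_zero, ENNReal.ofReal_zero, ENNReal.inv_zero]
    rw [ENNReal.mul_top (by positivity : ENNReal.ofReal (4*ε) ≠ 0)]
    exact le_top
  · have htpos : 0 < |t| := abs_pos.2 ht
    have hsub : {r : ℝ | |a - t * r| ≤ 2*ε} ⊆ Metric.closedBall (a/t) (2*ε/|t|) := by
      intro r hr
      simp only [Metric.mem_closedBall, Real.dist_eq]
      have : r - a/t = -((a - t*r)/t) := by field_simp; ring
      rw [this, abs_neg, abs_div]
      gcongr
      exact hr
    calc lam0 {r : ℝ | |a - t * r| ≤ 2*ε}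
        ≤ volume (Metric.closedBall (a/t) (2*ε/|t|)) :=
          le_trans (measure_mono hsub) (Measure.restrict_le_self _)
      _ = ENNReal.ofReal (2 * (2*ε/|t|)) := Real.volume_closedBall _ _
      _ = ENNReal.ofReal (4*ε) * (ENNReal.ofReal |t|)⁻¹ := by
          rw [← ENNReal.ofReal_inv_of_pos htpos, ← ENNReal.ofReal_mul (by positivity)]
          congr 1
          field_simp
          ring

lemma pt_bound {s t : ℝ} (hst : |s| ≤ |t|) :
    (ENNReal.ofReal |t|)⁻¹ ≤ sgi s * sgi t := by
  rw [sgi, sgi, ← ENNReal.mul_inv (Or.inr ENNReal.ofReal_ne_top) (Or.inl ENNReal.ofReal_ne_top)]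
  apply ENNReal.inv_le_inv.2
  rw [← ENNReal.ofReal_mul (Real.sqrt_nonneg _)]
  apply ENNReal.ofReal_le_ofReal
  calc Real.sqrt |s| * Real.sqrt |t| ≤ Real.sqrt |t| * Real.sqrt |t| := by
        apply mul_le_mul_of_nonneg_right (Real.sqrt_le_sqrt hst) (Real.sqrt_nonneg _)
    _ = |t| := Real.mul_self_sqrt (abs_nonneg _)

lemma unifSq_eq : unifSq = lam0.prod lam0 := by
  rw [unifSq, lam0, Measure.prod_restrict, ← Measure.volume_eq_prod, Set.Icc_prod_eq]

instance : IsProbabilityMeasure unifSq := by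
  rw [unifSq_eq]; infer_instance

noncomputable def detf (P Q R : ℝ × ℝ) : ℝ :=
  (Q.1 - P.1) * (R.2 - P.2) - (Q.2 - P.2) * (R.1 - P.1)

lemma measurable_detf3 : Measurable (fun w : (ℝ×ℝ) × (ℝ×ℝ) × (ℝ×ℝ) => detf w.1 w.2.1 w.2.2) := by
  unfold detf
  fun_prop

lemma coreE {ε : ℝ} (hε : 0 < ε) :
    (unifSq.prod (unifSq.prod unifSq))
      {w : (ℝ×ℝ) × (ℝ×ℝ) × (ℝ×ℝ) | |detf w.1 w.2.1 w.2.2| ≤ 2*ε ∧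
        |w.2.2.2 - w.1.2| ≤ |w.2.1.2 - w.1.2|} ≤ ENNReal.ofReal (64*ε) := by
  set E : Set ((ℝ×ℝ) × (ℝ×ℝ) × (ℝ×ℝ)) :=
    {w | |detf w.1 w.2.1 w.2.2| ≤ 2*ε ∧ |w.2.2.2 - w.1.2| ≤ |w.2.1.2 - w.1.2|} with hEdef
  have hE : MeasurableSet E := by
    apply MeasurableSet.inter
    · exact measurableSet_le (measurable_detf3.abs) measurable_const
    · exact measurableSet_le (by fun_prop : Measurable fun w : (ℝ×ℝ) × (ℝ×ℝ) × (ℝ×ℝ) => |w.2.2.2 - w.1.2|) (by fun_prop)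
  set C0 : ℝ≥0∞ := ENNReal.ofReal (4*ε) * ENNReal.ofReal 4 * ENNReal.ofReal 4 with hC0
  have hC0val : C0 = ENNReal.ofReal (64*ε) := by
    rw [hC0, ← ENNReal.ofReal_mul (by positivity), ← ENNReal.ofReal_mul (by positivity)]
    norm_num
    ring_nf
    rw [ENNReal.ofReal_mul' (by norm_num), ENNReal.ofReal_ofNat]
  rw [Measure.prod_apply hE]
  have hbound : ∀ᵐ P ∂unifSq, (unifSq.prod unifSq) (Prod.mk P ⁻¹' E) ≤ C0 := by
    have hmem : ∀ᵐ P ∂unifSq, P ∈ Set.Icc ((0,0) : ℝ×ℝ) (1,1) := by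
      rw [unifSq]
      exact ae_restrict_mem measurableSet_Icc
    filter_upwards [hmem] with P hP
    have hp2 : P.2 ∈ Icc (0:ℝ) 1 := ⟨hP.1.2, hP.2.2⟩
    have hEP : MeasurableSet (Prod.mk P ⁻¹' E) := hE.preimage measurable_prodMk_left
    rw [Measure.prod_apply hEP]
    -- goal: ∫⁻ Q, unifSq (Prod.mk Q ⁻¹' (Prod.mk P ⁻¹' E)) ∂unifSq ≤ C0
    have hQbound : ∀ Q : ℝ×ℝ, unifSq (Prod.mk Q ⁻¹' (Prod.mk P ⁻¹' E)) ≤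
        (ENNReal.ofReal (4*ε) * ENNReal.ofReal 4) * sgi (Q.2 - P.2) := by
      intro Q
      have hEPQ : MeasurableSet (Prod.mk Q ⁻¹' (Prod.mk P ⁻¹' E)) :=
        hEP.preimage measurable_prodMk_left
      rw [unifSq_eq]
      rw [Measure.prod_apply_symm hEPQ]
      have hpt : ∀ r2 : ℝ, lam0 ((fun r1 => (r1, r2)) ⁻¹' (Prod.mk Q ⁻¹' (Prod.mk P ⁻¹' E))) ≤
          (ENNReal.ofReal (4*ε) * sgi (Q.2 - P.2)) * sgi (r2 - P.2) := by
        intro r2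
        by_cases hc : |r2 - P.2| ≤ |Q.2 - P.2|
        · have hsub : (fun r1 => (r1, r2)) ⁻¹' (Prod.mk Q ⁻¹' (Prod.mk P ⁻¹' E)) ⊆
              {r1 : ℝ | |((Q.1 - P.1) * (r2 - P.2) + (Q.2 - P.2) * P.1) - (Q.2 - P.2) * r1| ≤ 2*ε} := by
            intro r1 hr1
            have h1 := hr1.1
            simp only [Set.mem_setOf_eq]
            have : ((Q.1 - P.1) * (r2 - P.2) + (Q.2 - P.2) * P.1) - (Q.2 - P.2) * r1
                = detf P Q (r1, r2) := by unfold detf; ring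
            rw [this]
            exact h1
          calc lam0 _ ≤ lam0 {r1 : ℝ | |((Q.1 - P.1) * (r2 - P.2) + (Q.2 - P.2) * P.1)
                - (Q.2 - P.2) * r1| ≤ 2*ε} := measure_mono hsub
            _ ≤ ENNReal.ofReal (4*ε) * (ENNReal.ofReal |Q.2 - P.2|)⁻¹ := strip hε _ _
            _ ≤ ENNReal.ofReal (4*ε) * (sgi (r2 - P.2) * sgi (Q.2 - P.2)) :=
                mul_le_mul_right (pt_bound hc) _
            _ = (ENNReal.ofReal (4*ε) * sgi (Q.2 - P.2)) * sgi (r2 - P.2) := by ring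
        · have hempty : (fun r1 => (r1, r2)) ⁻¹' (Prod.mk Q ⁻¹' (Prod.mk P ⁻¹' E)) = ∅ := by
            ext r1
            simp only [Set.mem_preimage, Set.mem_empty_iff_false, iff_false]
            intro hr1
            exact hc hr1.2
          rw [hempty, measure_empty]
          exact zero_le
      calc ∫⁻ r2, lam0 ((fun r1 => (r1, r2)) ⁻¹' (Prod.mk Q ⁻¹' (Prod.mk P ⁻¹' E))) ∂lam0
          ≤ ∫⁻ r2, (ENNReal.ofReal (4*ε) * sgi (Q.2 - P.2)) * sgi (r2 - P.2) ∂lam0 :=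
            lintegral_mono hpt
        _ = (ENNReal.ofReal (4*ε) * sgi (Q.2 - P.2)) * ∫⁻ r2, sgi (r2 - P.2) ∂lam0 :=
            lintegral_const_mul'' _ ((measurable_sgi.comp (measurable_id.sub measurable_const)).aemeasurable)
        _ ≤ (ENNReal.ofReal (4*ε) * sgi (Q.2 - P.2)) * ENNReal.ofReal 4 :=
            mul_le_mul_right (L3 hp2) _
        _ = (ENNReal.ofReal (4*ε) * ENNReal.ofReal 4) * sgi (Q.2 - P.2) := by ring
    calc ∫⁻ Q, unifSq (Prod.mk Q ⁻¹' (Prod.mk P ⁻¹' E)) ∂unifSq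
        ≤ ∫⁻ Q, (ENNReal.ofReal (4*ε) * ENNReal.ofReal 4) * sgi (Q.2 - P.2) ∂unifSq :=
          lintegral_mono hQbound
      _ = (ENNReal.ofReal (4*ε) * ENNReal.ofReal 4) * ∫⁻ Q, sgi (Q.2 - P.2) ∂unifSq :=
          lintegral_const_mul'' _ ((measurable_sgi.comp (measurable_snd.sub measurable_const)).aemeasurable)
      _ ≤ (ENNReal.ofReal (4*ε) * ENNReal.ofReal 4) * ENNReal.ofReal 4 := by
          apply mul_le_mul_right
          have hm : Measurable (fun Q : ℝ×ℝ => sgi (Q.2 - P.2)) :=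
            measurable_sgi.comp (measurable_snd.sub measurable_const)
          rw [unifSq_eq, lintegral_prod _ hm.aemeasurable]
          calc ∫⁻ q1, ∫⁻ q2, sgi (q2 - P.2) ∂lam0 ∂lam0
              ≤ ∫⁻ _, ENNReal.ofReal 4 ∂lam0 := lintegral_mono (fun q1 => L3 hp2)
            _ = ENNReal.ofReal 4 := by simp
      _ = C0 := by rw [hC0]
  calc ∫⁻ P, (unifSq.prod unifSq) (Prod.mk P ⁻¹' E) ∂unifSq
      ≤ ∫⁻ _, C0 ∂unifSq := lintegral_mono_ae hbound
    _ = C0 := by simp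
    _ = ENNReal.ofReal (64*ε) := hC0val


lemma coreB {ε : ℝ} (hε : 0 < ε) :
    (unifSq.prod (unifSq.prod unifSq))
      {w : (ℝ×ℝ) × (ℝ×ℝ) × (ℝ×ℝ) | triArea w.1 w.2.1 w.2.2 ≤ ε} ≤
      ENNReal.ofReal (128*ε) := by
  have hBeq : {w : (ℝ×ℝ) × (ℝ×ℝ) × (ℝ×ℝ) | triArea w.1 w.2.1 w.2.2 ≤ ε} =
      {w : (ℝ×ℝ) × (ℝ×ℝ) × (ℝ×ℝ) | |detf w.1 w.2.1 w.2.2| ≤ 2*ε} := by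
    ext w
    simp only [Set.mem_setOf_eq, triArea, detf]
    rw [div_le_iff₀ (by norm_num : (0:ℝ) < 2)]
    constructor <;> intro h <;> linarith
  rw [hBeq]
  set E : Set ((ℝ×ℝ) × (ℝ×ℝ) × (ℝ×ℝ)) :=
    {w | |detf w.1 w.2.1 w.2.2| ≤ 2*ε ∧ |w.2.2.2 - w.1.2| ≤ |w.2.1.2 - w.1.2|} with hEdef
  have hE : MeasurableSet E := by
    apply MeasurableSet.inter
    · exact measurableSet_le (measurable_detf3.abs) measurable_const
    · exact measurableSet_le
        (by fun_prop : Measurable fun w : (ℝ×ℝ) × (ℝ×ℝ) × (ℝ×ℝ) => |w.2.2.2 - w.1.2|)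
        (by fun_prop)
  have hσ : MeasurePreserving (Prod.map (id : ℝ×ℝ → ℝ×ℝ) (Prod.swap : (ℝ×ℝ)×(ℝ×ℝ) → (ℝ×ℝ)×(ℝ×ℝ)))
      (unifSq.prod (unifSq.prod unifSq)) (unifSq.prod (unifSq.prod unifSq)) :=
    (MeasurePreserving.id unifSq).prod Measure.measurePreserving_swap
  have hsub : {w : (ℝ×ℝ) × (ℝ×ℝ) × (ℝ×ℝ) | |detf w.1 w.2.1 w.2.2| ≤ 2*ε} ⊆
      E ∪ (Prod.map (id : ℝ×ℝ → ℝ×ℝ) Prod.swap) ⁻¹' E := by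
    intro w hw
    rcases le_total |w.2.2.2 - w.1.2| |w.2.1.2 - w.1.2| with h | h
    · exact Or.inl ⟨hw, h⟩
    · right
      refine ⟨?_, h⟩
      show |detf w.1 w.2.2 w.2.1| ≤ 2*ε
      have : detf w.1 w.2.2 w.2.1 = -detf w.1 w.2.1 w.2.2 := by unfold detf; ring
      rw [this, abs_neg]
      exact hw
  calc (unifSq.prod (unifSq.prod unifSq)) {w : (ℝ×ℝ) × (ℝ×ℝ) × (ℝ×ℝ) | |detf w.1 w.2.1 w.2.2| ≤ 2*ε}
      ≤ (unifSq.prod (unifSq.prod unifSq)) (E ∪ (Prod.map (id : ℝ×ℝ → ℝ×ℝ) Prod.swap) ⁻¹' E) :=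
        measure_mono hsub
    _ ≤ (unifSq.prod (unifSq.prod unifSq)) E +
        (unifSq.prod (unifSq.prod unifSq)) ((Prod.map (id : ℝ×ℝ → ℝ×ℝ) Prod.swap) ⁻¹' E) :=
        measure_union_le _ _
    _ = (unifSq.prod (unifSq.prod unifSq)) E + (unifSq.prod (unifSq.prod unifSq)) E := by
        rw [hσ.measure_preimage hE.nullMeasurableSet]
    _ ≤ ENNReal.ofReal (64*ε) + ENNReal.ofReal (64*ε) := add_le_add (coreE hε) (coreE hε)
    _ = ENNReal.ofReal (128*ε) := by
        rw [← ENNReal.ofReal_add (by positivity) (by positivity)]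
        ring_nf


instance (n : ℕ) : IsProbabilityMeasure (μpts n) := by
  unfold μpts; infer_instance

lemma measurable_triple {n : ℕ} (i j k : Fin n) :
    Measurable (fun x : Fin n → ℝ×ℝ => (x i, x j, x k)) :=
  (measurable_pi_apply i).prodMk ((measurable_pi_apply j).prodMk (measurable_pi_apply k))

lemma map_triple {n : ℕ} {i j k : Fin n} (hij : i ≠ j) (hik : i ≠ k) (hjk : j ≠ k) :
    Measure.map (fun x : Fin n → ℝ×ℝ => (x i, x j, x k)) (μpts n) =
      unifSq.prod (unifSq.prod unifSq) := by
  classical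
  have hφ := measurable_triple i j k
  haveI : IsProbabilityMeasure
      (Measure.map (fun x : Fin n → ℝ×ℝ => (x i, x j, x k)) (μpts n)) :=
    Measure.isProbabilityMeasure_map hφ.aemeasurable
  apply MeasureTheory.ext_of_generate_finite
    (Set.image2 (· ×ˢ ·) {s : Set (ℝ×ℝ) | MeasurableSet s}
      (Set.image2 (· ×ˢ ·) {s : Set (ℝ×ℝ) | MeasurableSet s} {s : Set (ℝ×ℝ) | MeasurableSet s}))
  · exact (generateFrom_eq_prod generateFrom_measurableSet generateFrom_prod
      isCountablySpanning_measurableSet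
      (isCountablySpanning_measurableSet.prod isCountablySpanning_measurableSet)).symm
  · exact IsPiSystem.prod isPiSystem_measurableSet isPiSystem_prod
  · rintro _ ⟨s, hs, _, ⟨t, ht, u, hu, rfl⟩, rfl⟩
    rw [Measure.map_apply hφ ((show MeasurableSet s from hs).prod ((show MeasurableSet t from ht).prod (show MeasurableSet u from hu)))]
    rw [Measure.prod_prod, Measure.prod_prod]
    set F : Fin n → Set (ℝ×ℝ) := fun l => if l = i then s else if l = j then t else if l = k then u else Set.univ with hF
    have hpre : (fun x : Fin n → ℝ×ℝ => (x i, x j, x k)) ⁻¹' (s ×ˢ t ×ˢ u) = Set.pi Set.univ F := by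
      ext x
      simp only [Set.mem_preimage, Set.mem_prod, Set.mem_pi, Set.mem_univ, true_implies, hF]
      constructor
      · rintro ⟨h1, h2, h3⟩ l
        split_ifs with h h' h''
        · subst h; exact h1
        · subst h'; exact h2
        · subst h''; exact h3
        · trivial
      · intro h
        refine ⟨?_, ?_, ?_⟩
        · have := h i; simpa using this
        · have := h j; simp [hij.symm] at this; simpa using this
        · have := h k; simp [hik.symm, hjk.symm] at this; simpa using this
    rw [hpre, μpts, Measure.pi_pi]
    have hprod : ∏ l, unifSq (F l) = ∏ l ∈ ({i, j, k} : Finset (Fin n)), unifSq (F l) := by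
      symm
      apply Finset.prod_subset (Finset.subset_univ _)
      intro l _ hl
      simp only [Finset.mem_insert, Finset.mem_singleton, not_or] at hl
      have : F l = Set.univ := by
        simp only [hF, if_neg hl.1, if_neg hl.2.1, if_neg hl.2.2]
      rw [this, measure_univ]
    rw [hprod]
    have hik' : i ∉ ({j, k} : Finset (Fin n)) := by simp [hij, hik]
    have hjk' : j ∉ ({k} : Finset (Fin n)) := by simp [hjk]
    rw [Finset.prod_insert hik', Finset.prod_insert hjk', Finset.prod_singleton]
    have hFi : F i = s := by simp [hF]
    have hFj : F j = t := by simp [hF, hij.symm]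
    have hFk : F k = u := by simp [hF, hik.symm, hjk.symm]
    rw [hFi, hFj, hFk]
  · rw [measure_univ, measure_univ]


lemma cover {n : ℕ} (hn : 3 ≤ n) (ε : ℝ) (x : Fin n → ℝ×ℝ) (h : minTriArea n x ≤ ε) :
    ∃ i j k : Fin n, i < j ∧ j < k ∧ triArea (x i) (x j) (x k) ≤ ε := by
  set S := {a | ∃ i j k : Fin n, i < j ∧ j < k ∧ a = triArea (x i) (x j) (x k)} with hS
  have hne : S.Nonempty := by
    refine ⟨triArea (x ⟨0, by omega⟩) (x ⟨1, by omega⟩) (x ⟨2, by omega⟩),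
      ⟨⟨0, by omega⟩, ⟨1, by omega⟩, ⟨2, by omega⟩, ?_, ?_, rfl⟩⟩
    · exact Fin.mk_lt_mk.2 (by omega)
    · exact Fin.mk_lt_mk.2 (by omega)
  have hfin : S.Finite := by
    apply (Set.finite_range
      (fun t : Fin n × Fin n × Fin n => triArea (x t.1) (x t.2.1) (x t.2.2))).subset
    rintro a ⟨i, j, k, _, _, rfl⟩
    exact ⟨(i, j, k), rfl⟩
  obtain ⟨i, j, k, hij, hjk, ha⟩ := hne.csInf_mem hfin
  exact ⟨i, j, k, hij, hjk, by rw [← ha]; exact h⟩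

lemma triple_bound {n : ℕ} {i j k : Fin n} (hij : i < j) (hjk : j < k) {ε : ℝ} (hε : 0 < ε) :
    μpts n {x | triArea (x i) (x j) (x k) ≤ ε} ≤ ENNReal.ofReal (128*ε) := by
  have hT : MeasurableSet {w : (ℝ×ℝ)×(ℝ×ℝ)×(ℝ×ℝ) | triArea w.1 w.2.1 w.2.2 ≤ ε} := by
    apply measurableSet_le _ measurable_const
    unfold triArea
    fun_prop
  have hset : {x : Fin n → ℝ×ℝ | triArea (x i) (x j) (x k) ≤ ε} =
      (fun x : Fin n → ℝ×ℝ => (x i, x j, x k)) ⁻¹' {w | triArea w.1 w.2.1 w.2.2 ≤ ε} := rfl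
  rw [hset, ← Measure.map_apply (measurable_triple i j k) hT,
    map_triple hij.ne (hij.trans hjk).ne hjk.ne]
  exact coreB hε

lemma union_bound {n : ℕ} (hn : 3 ≤ n) {ε : ℝ} (hε : 0 < ε) :
    μpts n {x | minTriArea n x ≤ ε} ≤ (n : ℝ≥0∞)^3 * ENNReal.ofReal (128*ε) := by
  have hterm : ∀ i j k : Fin n,
      μpts n {x | i < j ∧ j < k ∧ triArea (x i) (x j) (x k) ≤ ε} ≤ ENNReal.ofReal (128*ε) := by
    intro i j k
    by_cases h : i < j ∧ j < k
    · calc μpts n {x | i < j ∧ j < k ∧ triArea (x i) (x j) (x k) ≤ ε}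
          ≤ μpts n {x | triArea (x i) (x j) (x k) ≤ ε} :=
            measure_mono (fun x hx => hx.2.2)
        _ ≤ ENNReal.ofReal (128*ε) := triple_bound h.1 h.2 hε
    · have : {x : Fin n → ℝ×ℝ | i < j ∧ j < k ∧ triArea (x i) (x j) (x k) ≤ ε} = ∅ := by
        ext x
        simp only [Set.mem_setOf_eq, Set.mem_empty_iff_false, iff_false]
        intro hx
        exact h ⟨hx.1, hx.2.1⟩
      rw [this, measure_empty]
      exact zero_le
  have hsub : {x : Fin n → ℝ×ℝ | minTriArea n x ≤ ε} ⊆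
      ⋃ (i : Fin n) (j : Fin n) (k : Fin n),
        {x : Fin n → ℝ×ℝ | i < j ∧ j < k ∧ triArea (x i) (x j) (x k) ≤ ε} := by
    intro x hx
    obtain ⟨i, j, k, h1, h2, h3⟩ := cover hn ε x hx
    exact Set.mem_iUnion.2 ⟨i, Set.mem_iUnion.2 ⟨j, Set.mem_iUnion.2 ⟨k, ⟨h1, h2, h3⟩⟩⟩⟩
  calc μpts n {x | minTriArea n x ≤ ε}
      ≤ μpts n (⋃ (i : Fin n) (j : Fin n) (k : Fin n),
          {x : Fin n → ℝ×ℝ | i < j ∧ j < k ∧ triArea (x i) (x j) (x k) ≤ ε}) :=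
        measure_mono hsub
    _ ≤ ∑' (i : Fin n), μpts n (⋃ (j : Fin n) (k : Fin n),
          {x : Fin n → ℝ×ℝ | i < j ∧ j < k ∧ triArea (x i) (x j) (x k) ≤ ε}) :=
        measure_iUnion_le _
    _ ≤ ∑' (i : Fin n), ∑' (j : Fin n), μpts n (⋃ (k : Fin n),
          {x : Fin n → ℝ×ℝ | i < j ∧ j < k ∧ triArea (x i) (x j) (x k) ≤ ε}) :=
        ENNReal.tsum_le_tsum (fun i => measure_iUnion_le _)
    _ ≤ ∑' (i : Fin n), ∑' (j : Fin n), ∑' (k : Fin n), μpts n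
          {x : Fin n → ℝ×ℝ | i < j ∧ j < k ∧ triArea (x i) (x j) (x k) ≤ ε} :=
        ENNReal.tsum_le_tsum (fun i => ENNReal.tsum_le_tsum (fun j => measure_iUnion_le _))
    _ ≤ ∑' (_ : Fin n), ∑' (_ : Fin n), ∑' (_ : Fin n), ENNReal.ofReal (128*ε) :=
        ENNReal.tsum_le_tsum (fun i => ENNReal.tsum_le_tsum (fun j =>
          ENNReal.tsum_le_tsum (fun k => hterm i j k)))
    _ = (n : ℝ≥0∞)^3 * ENNReal.ofReal (128*ε) := by
        simp [tsum_fintype, Finset.sum_const, Finset.card_univ]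
        ring


theorem min_triangle_area_lower_bound_whp :
    ∃ c₁ : ℝ, 0 < c₁ ∧ ∃ N : ℕ, ∀ n : ℕ, N ≤ n → ∀ δ : ℕ, 0 < δ →
      μpts n {x | c₁ / (2 ^ δ * (n : ℝ) ^ 3) < minTriArea n x} ≥ 1 - 1 / 2 ^ δ := by
  refine ⟨1/128, by norm_num, 3, ?_⟩
  intro n hn δ _
  have hnR : (0:ℝ) < (n:ℝ) := by
    have : (3:ℝ) ≤ (n:ℝ) := by exact_mod_cast hn
    linarith
  set ε : ℝ := (1/128) / (2 ^ δ * (n : ℝ) ^ 3) with hεdef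
  have hε : 0 < ε := by positivity
  have hcompl : μpts n {x | minTriArea n x ≤ ε} ≤ ((2:ℝ≥0∞)^δ)⁻¹ := by
    have h128 : 128 * ε = ((2:ℝ)^δ * (n:ℝ)^3)⁻¹ := by
      rw [hεdef]
      field_simp
    have hcast : ENNReal.ofReal ((2:ℝ)^δ * (n:ℝ)^3) = (2:ℝ≥0∞)^δ * (n:ℝ≥0∞)^3 := by
      rw [ENNReal.ofReal_mul (by positivity), ENNReal.ofReal_pow (by norm_num : (0:ℝ) ≤ 2),
        ENNReal.ofReal_pow (by positivity), ENNReal.ofReal_natCast, ENNReal.ofReal_ofNat]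
    have hn0 : (n:ℝ≥0∞) ≠ 0 := Nat.cast_ne_zero.2 (by omega)
    calc μpts n {x | minTriArea n x ≤ ε}
        ≤ (n : ℝ≥0∞)^3 * ENNReal.ofReal (128*ε) := union_bound hn hε
      _ = (n : ℝ≥0∞)^3 * ((2:ℝ≥0∞)^δ * (n:ℝ≥0∞)^3)⁻¹ := by
          rw [h128, ENNReal.ofReal_inv_of_pos (by positivity), hcast]
      _ = ((2:ℝ≥0∞)^δ)⁻¹ := by
          rw [ENNReal.mul_inv (Or.inl (by simp)) (Or.inr (by simp [hn0]))]
          rw [← mul_assoc, mul_comm ((n:ℝ≥0∞)^3), mul_assoc]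
          rw [ENNReal.mul_inv_cancel (by simp [hn0]) (by simp), mul_one]
  have hSc : {x : Fin n → ℝ×ℝ | ε < minTriArea n x}ᶜ = {x | minTriArea n x ≤ ε} := by
    ext x
    simp [not_lt]
  rw [ge_iff_le, one_div, tsub_le_iff_right]
  calc (1:ℝ≥0∞) = μpts n Set.univ := measure_univ.symm
    _ = μpts n ({x : Fin n → ℝ×ℝ | ε < minTriArea n x} ∪
        {x : Fin n → ℝ×ℝ | ε < minTriArea n x}ᶜ) := by rw [Set.union_compl_self]
    _ ≤ μpts n {x : Fin n → ℝ×ℝ | ε < minTriArea n x} +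
        μpts n {x : Fin n → ℝ×ℝ | ε < minTriArea n x}ᶜ := measure_union_le _ _
    _ ≤ μpts n {x : Fin n → ℝ×ℝ | ε < minTriArea n x} + ((2:ℝ≥0∞)^δ)⁻¹ := by
        apply add_le_add_right
        rw [hSc]
        exact hcompl
end

section
/- For all integers n ≥ 2 and K ≥ 2, the number of n-element subsets of the K×K grid that contain two distinct points with the same second coordinate (i.e., lying on the same horizontal grid line) is at most binom(K², n−1) · (n−1) · (K−1). -/
/-- The `K × K` grid `{0, 1, …, K−1}² ⊆ ℤ²`. -/
def grid (K : ℕ) : Finset (ℤ × ℤ) :=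
  (Finset.range K ×ˢ Finset.range K).image fun p => ((p.1 : ℤ), (p.2 : ℤ))

/-- A grid point viewed as a point of `ℝ²`. -/
def toR (p : ℤ × ℤ) : ℝ × ℝ := ((p.1 : ℝ), (p.2 : ℝ))

lemma grid_card (K : ℕ) : (grid K).card = K ^ 2 := by
  rw [grid, Finset.card_image_of_injective, Finset.card_product, Finset.card_range, sq]
  intro a b h
  simp only [Prod.ext_iff] at h
  exact Prod.ext (by exact_mod_cast h.1) (by exact_mod_cast h.2)

lemma mem_grid_fst {K : ℕ} {p : ℤ × ℤ} (hp : p ∈ grid K) :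
    p.1 ∈ (Finset.range K).image (Nat.cast : ℕ → ℤ) := by
  simp only [grid, Finset.mem_image, Finset.mem_product, Finset.mem_range] at hp ⊢
  obtain ⟨⟨a, b⟩, ⟨ha, _⟩, h⟩ := hp
  exact ⟨a, ha, by rw [← h]⟩

open Classical in
theorem count_same_horizontal_line_subsets_le (n K : ℕ) (hn : 2 ≤ n) (hK : 2 ≤ K) :
    (((grid K).powersetCard n).filter fun S => ∃ P ∈ S, ∃ Q ∈ S,
        P ≠ Q ∧ P.2 = Q.2).card
      ≤ (K ^ 2).choose (n - 1) * (n - 1) * (K - 1) := by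
  classical
  set B := ((grid K).powersetCard (n - 1)).sigma (fun T =>
    T.sigma (fun Q => (((Finset.range K).image (Nat.cast : ℕ → ℤ)).erase Q.1)))
    with hB
  have hcard : B.card = (K ^ 2).choose (n - 1) * (n - 1) * (K - 1) := by
    rw [hB, Finset.card_sigma]
    have h1 : ∀ T ∈ (grid K).powersetCard (n - 1),
        (T.sigma (fun Q => (((Finset.range K).image (Nat.cast : ℕ → ℤ)).erase Q.1))).card
          = (n - 1) * (K - 1) := by
      intro T hT
      rw [Finset.mem_powersetCard] at hT
      rw [Finset.card_sigma]
      have h2 : ∀ Q ∈ T,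
          ((((Finset.range K).image (Nat.cast : ℕ → ℤ)).erase Q.1)).card = K - 1 := by
        intro Q hQ
        rw [Finset.card_erase_of_mem (mem_grid_fst (hT.1 hQ)),
          Finset.card_image_of_injective _ (fun a b h => by exact_mod_cast h),
          Finset.card_range]
      rw [Finset.sum_congr rfl h2, Finset.sum_const, hT.2, smul_eq_mul]
    rw [Finset.sum_congr rfl h1, Finset.sum_const, smul_eq_mul,
      Finset.card_powersetCard, grid_card, mul_assoc]
  rw [← hcard]
  apply Finset.card_le_card_of_injOn (fun S =>
    if h : ∃ P ∈ S, ∃ Q ∈ S, P ≠ Q ∧ P.2 = Q.2 then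
      ⟨S.erase h.choose, h.choose_spec.2.choose, h.choose.1⟩
    else ⟨∅, (0, 0), 0⟩)
  · intro S hS
    rw [Finset.mem_coe, Finset.mem_filter, Finset.mem_powersetCard] at hS
    obtain ⟨⟨hsub, hcardS⟩, h⟩ := hS
    simp only [dif_pos h]
    set P := h.choose with hPdef
    set Q := h.choose_spec.2.choose with hQdef
    have hP : P ∈ S := h.choose_spec.1
    obtain ⟨hQ, hne, heq⟩ := h.choose_spec.2.choose_spec
    have hm1 : S.erase P ∈ (grid K).powersetCard (n - 1) :=
      Finset.mem_powersetCard.2 ⟨(Finset.erase_subset _ _).trans hsub,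
        by rw [Finset.card_erase_of_mem hP, hcardS]⟩
    have hm2 : Q ∈ S.erase P := Finset.mem_erase.2 ⟨Ne.symm hne, hQ⟩
    have hm3 : P.1 ∈ ((Finset.range K).image (Nat.cast : ℕ → ℤ)).erase Q.1 := by
      refine Finset.mem_erase.2 ⟨?_, mem_grid_fst (hsub hP)⟩
      intro hx
      exact hne (Prod.ext hx heq)
    exact Finset.mem_sigma.2 ⟨hm1, Finset.mem_sigma.2 ⟨hm2, hm3⟩⟩
  · intro S₁ hS₁ S₂ hS₂ hfeq
    rw [Finset.coe_filter, Set.mem_setOf_eq] at hS₁ hS₂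
    obtain ⟨_, h₁⟩ := hS₁
    obtain ⟨_, h₂⟩ := hS₂
    simp only [dif_pos h₁, dif_pos h₂, Sigma.mk.inj_iff, heq_eq_eq] at hfeq
    obtain ⟨hT, hQ, hx⟩ := hfeq
    set P₁ := h₁.choose
    set P₂ := h₂.choose
    have hP₁ : P₁ ∈ S₁ := h₁.choose_spec.1
    have hP₂ : P₂ ∈ S₂ := h₂.choose_spec.1
    have heq₁ := h₁.choose_spec.2.choose_spec.2.2
    have heq₂ := h₂.choose_spec.2.choose_spec.2.2
    have hPeq : P₁ = P₂ := Prod.ext hx (by rw [heq₁, heq₂]; exact congrArg Prod.snd hQ)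
    rw [← Finset.insert_erase hP₁, ← Finset.insert_erase hP₂, hT, hPeq]
end
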